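/- If teams T and T' are (k+1)-bisimilar, then for every successor team S of T (i.e., S ⊆ R[T] and T ⊆ R^{-1}[S]) there exists a successor team S' of T' such that S and S' are k-bisimilar. -/
import Mathlib


structure KModel (W : Type) where
  R : W → W → Prop
  V : ℕ → Set W

inductive MF : Type
  | prop : ℕ → MF
  | bot : MF
  | neg : MF → MF
  | or : MF → MF → MF
  | and : MF → MF → MF
  | dia : MF → MF
  | box : MF → MF

def MF.top : MF := MF.neg MF.bot

def wSat {W : Type} (M : KModel W) : W → MF → Prop
  | w, .prop p => w ∈ M.V p
  | _, .bot => False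
  | w, .neg a => ¬ wSat M w a
  | w, .or a b => wSat M w a ∨ wSat M w b
  | w, .and a b => wSat M w a ∧ wSat M w b
  | w, .dia a => ∃ v, M.R w v ∧ wSat M v a
  | w, .box a => ∀ v, M.R w v → wSat M v a

inductive IncForm : Type
  | prop : ℕ → IncForm
  | bot : IncForm
  | incl : List MF → List MF → IncForm
  | neg : MF → IncForm
  | or : IncForm → IncForm → IncForm
  | and : IncForm → IncForm → IncForm
  | dia : IncForm → IncForm
  | box : IncForm → IncForm

/-- image R[T] -/
def img {W : Type} (M : KModel W) (T : Set W) : Set W := {v | ∃ w ∈ T, M.R w v}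

/-- successor team relation: S ⊆ R[T] and T ⊆ R⁻¹[S] -/
def succTeam {W : Type} (M : KModel W) (T S : Set W) : Prop :=
  (∀ v ∈ S, ∃ w ∈ T, M.R w v) ∧ (∀ w ∈ T, ∃ v ∈ S, M.R w v)

def TSat {W : Type} (M : KModel W) : Set W → IncForm → Prop
  | T, .prop p => T ⊆ M.V p
  | T, .bot => T = ∅
  | T, .incl as bs => ∀ w ∈ T, ∃ v ∈ T, ∀ i, ∀ (h1 : i < as.length) (h2 : i < bs.length),
      (wSat M w (as.get ⟨i, h1⟩) ↔ wSat M v (bs.get ⟨i, h2⟩))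
  | T, .neg a => ∀ w ∈ T, ¬ wSat M w a
  | T, .or f g => ∃ T1 T2, T1 ∪ T2 = T ∧ TSat M T1 f ∧ TSat M T2 g
  | T, .and f g => TSat M T f ∧ TSat M T g
  | T, .dia f => ∃ S, succTeam M T S ∧ TSat M S f
  | T, .box f => TSat M (img M T) f

/-- embedding of classical formulas into ML(⊆) -/
def toInc : MF → IncForm
  | .prop p => .prop p
  | .bot => .bot
  | .neg a => .neg a
  | .or a b => .or (toInc a) (toInc b)
  | .and a b => .and (toInc a) (toInc b)
  | .dia a => .dia (toInc a)
  | .box a => .box (toInc a)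

/-- translate a Boolean constant to ⊤ or ⊥ -/
def ofBool : Bool → MF := fun x => if x then MF.top else MF.bot

/-- α^⊤ = α, α^⊥ = ¬α -/
def signed : Bool → MF → MF := fun x a => if x then a else a.neg

/-- a^x = α₁^{x₁} ∧ ... ∧ αₙ^{xₙ} -/
def conjSigned (xs : List Bool) (as : List MF) : MF :=
  (List.zipWith signed xs as).foldr MF.and MF.top

/-- world X,k-bisimilarity between pointed models -/
def wBisim {W W' : Type} (M : KModel W) (M' : KModel W') (X : Set ℕ) :
    ℕ → W → W' → Prop
  | 0, w, w' => ∀ p ∈ X, (w ∈ M.V p ↔ w' ∈ M'.V p)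
  | k+1, w, w' =>
      (∀ p ∈ X, (w ∈ M.V p ↔ w' ∈ M'.V p))
      ∧ (∀ v, M.R w v → ∃ v', M'.R w' v' ∧ wBisim M M' X k v v')
      ∧ (∀ v', M'.R w' v' → ∃ v, M.R w v ∧ wBisim M M' X k v v')

/-- team X,k-bisimilarity -/
def tBisim {W W' : Type} (M : KModel W) (M' : KModel W') (X : Set ℕ) (k : ℕ)
    (T : Set W) (T' : Set W') : Prop :=
  (∀ w ∈ T, ∃ w' ∈ T', wBisim M M' X k w w')
  ∧ (∀ w' ∈ T', ∃ w ∈ T, wBisim M M' X k w w')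

theorem stmt15 {W W' : Type} (M : KModel W) (M' : KModel W')
    (X : Set ℕ) (k : ℕ) (T : Set W) (T' : Set W')
    (hb : tBisim M M' X (k+1) T T') :
    ∀ S : Set W, succTeam M T S →
      ∃ S' : Set W', succTeam M' T' S' ∧ tBisim M M' X k S S' := by
  intro S hS
  refine ⟨{v' | ∃ w' ∈ T', M'.R w' v' ∧ ∃ v ∈ S, wBisim M M' X k v v'}, ?_, ?_, ?_⟩
  · constructor
    · rintro v' ⟨w', hw', hR, -⟩
      exact ⟨w', hw', hR⟩
    · intro w' hw'
      obtain ⟨w, hw, hbis⟩ := hb.2 w' hw'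
      obtain ⟨v, hv, hRv⟩ := hS.2 w hw
      obtain ⟨v', hRv', hbv⟩ := hbis.2.1 v hRv
      exact ⟨v', ⟨w', hw', hRv', v, hv, hbv⟩, hRv'⟩
  · intro v hv
    obtain ⟨w, hw, hR⟩ := hS.1 v hv
    obtain ⟨w', hw', hbis⟩ := hb.1 w hw
    obtain ⟨v', hRv', hbv⟩ := hbis.2.1 v hR
    exact ⟨v', ⟨w', hw', hRv', v, hv, hbv⟩, hbv⟩
  · rintro v' ⟨w', hw', hR, v, hv, hbv⟩
    exact ⟨v, hv, hbv⟩
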